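/- Let G ≤ Π_n be a subgroup with a full orbit, i.e., there is an index k whose G-orbit has exactly |G| elements. If S is doubly stochastic and lies in the affine hull of G (viewed as a subset of ℝ^{n×n}), then S lies in the convex hull of G. Consequently aff(G) ∩ DS = conv(G). -/

import Mathlib

/- Setting: `pm n σ` is the permutation matrix of `σ` (entry (i,j) equals 1 iff σ j = i,
so it "sends j to σ j"). `DS n` is the set of doubly stochastic matrices and `matSet G`
is the subgroup `G` realized as a set of permutation matrices. -/

open Matrix Finset

noncomputable section

def pm (n : ℕ) (σ : Equiv.Perm (Fin n)) : Matrix (Fin n) (Fin n) ℝ :=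
  Matrix.of fun i j => if σ j = i then (1 : ℝ) else 0

def DS (n : ℕ) : Set (Matrix (Fin n) (Fin n) ℝ) :=
  {S | (∀ i j, 0 ≤ S i j) ∧ (∀ i, ∑ j, S i j = 1) ∧ (∀ j, ∑ i, S i j = 1)}

def matSet {n : ℕ} (G : Subgroup (Equiv.Perm (Fin n))) : Set (Matrix (Fin n) (Fin n) ℝ) :=
  (pm n) '' (G : Set (Equiv.Perm (Fin n)))

/-- if `G` has a full orbit (some index has a `G`-orbit of exactly `|G|`
elements), then every doubly stochastic matrix in the affine hull of `G` lies in the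
convex hull of `G`; consequently `aff(G) ∩ DS = conv(G)`. -/
lemma pm_mem_DS {n : ℕ} (σ : Equiv.Perm (Fin n)) : pm n σ ∈ DS n := by
  refine ⟨fun i j => ?_, fun i => ?_, fun j => ?_⟩
  · simp only [pm, Matrix.of_apply]; positivity
  · simp [pm, Equiv.apply_eq_iff_eq_symm_apply]
  · simp [pm]

lemma DS_convex {n : ℕ} : Convex ℝ (DS n) := by
  rintro x ⟨hx0, hx1, hx2⟩ y ⟨hy0, hy1, hy2⟩ a b ha hb hab
  refine ⟨fun i j => ?_, fun i => ?_, fun j => ?_⟩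
  · simp only [Matrix.add_apply, Matrix.smul_apply, smul_eq_mul]
    exact add_nonneg (mul_nonneg ha (hx0 i j)) (mul_nonneg hb (hy0 i j))
  · simp [Matrix.add_apply, Matrix.smul_apply, smul_eq_mul, Finset.sum_add_distrib,
      ← Finset.mul_sum, hx1 i, hy1 i, hab]
  · simp [Matrix.add_apply, Matrix.smul_apply, smul_eq_mul, Finset.sum_add_distrib,
      ← Finset.mul_sum, hx2 j, hy2 j, hab]

theorem stmt14 {n : ℕ} (G : Subgroup (Equiv.Perm (Fin n)))
    (hfull : ∃ k : Fin n, Set.ncard {x : Fin n | ∃ σ ∈ G, σ k = x} = Nat.card G) :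
    (∀ S ∈ DS n,
      S ∈ (affineSpan ℝ (matSet G) : Set (Matrix (Fin n) (Fin n) ℝ)) →
        S ∈ convexHull ℝ (matSet G)) ∧
    (affineSpan ℝ (matSet G) : Set (Matrix (Fin n) (Fin n) ℝ)) ∩ DS n =
      convexHull ℝ (matSet G) := by
  obtain ⟨k, hk⟩ := hfull
  haveI : Nonempty (G : Set (Equiv.Perm (Fin n))) := ⟨⟨1, G.one_mem⟩⟩
  haveI : Fintype ↥(G : Set (Equiv.Perm (Fin n))) := Fintype.ofFinite _
  set f : ↥(G : Set (Equiv.Perm (Fin n))) → Fin n := fun g => (g : Equiv.Perm (Fin n)) k with hf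
  have horb : {x : Fin n | ∃ σ ∈ G, σ k = x} = Set.range f := by
    ext x
    constructor
    · rintro ⟨σ, hσ, rfl⟩; exact ⟨⟨σ, hσ⟩, rfl⟩
    · rintro ⟨⟨σ, hσ⟩, rfl⟩; exact ⟨σ, hσ, rfl⟩
  have hinj : Function.Injective f := by
    rw [← Set.injOn_univ, ← Finset.coe_univ]
    apply Finset.injOn_of_card_image_eq
    have : Set.range f = ↑(Finset.univ.image f) := by
      rw [Finset.coe_image, Finset.coe_univ, Set.image_univ]
    rw [horb, this, Set.ncard_coe_finset] at hk
    rw [hk, Finset.card_univ]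
    rw [Nat.card_eq_fintype_card]
    exact Fintype.card_congr (Equiv.refl _)
  have main : ∀ S ∈ DS n,
      S ∈ (affineSpan ℝ (matSet G) : Set (Matrix (Fin n) (Fin n) ℝ)) →
        S ∈ convexHull ℝ (matSet G) := by
    intro S hDS hAff
    have hrange : matSet G = Set.range (fun g : (G : Set (Equiv.Perm (Fin n))) => pm n g) :=
      Set.image_eq_range _ _
    rw [hrange] at hAff
    obtain ⟨s, w, hw1, hS⟩ := eq_affineCombination_of_mem_affineSpan hAff
    rw [Finset.affineCombination_eq_linear_combination _ _ _ hw1] at hS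
    have hSentry : ∀ g ∈ s, S (f g) k = w g := by
      intro g hg
      rw [hS]
      simp only [Matrix.sum_apply, Matrix.smul_apply, pm, Matrix.of_apply, smul_eq_mul]
      rw [Finset.sum_eq_single g]
      · simp [hf]
      · intro i _ hne
        have : ¬ (i : Equiv.Perm (Fin n)) k = f g := fun h => hne (hinj h)
        simp [this]
      · intro h; exact absurd hg h
    have hmass : S = s.centerMass w (fun g => pm n g) := by
      rw [Finset.centerMass_eq_of_sum_1 _ _ hw1, hS]
    rw [hmass]
    exact Finset.centerMass_mem_convexHull s
      (fun i hi => (hSentry i hi) ▸ hDS.1 _ _)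
      (by rw [hw1]; norm_num)
      (fun i _ => ⟨i, i.2, rfl⟩)
  refine ⟨main, Set.Subset.antisymm ?_ ?_⟩
  · rintro S ⟨h1, h2⟩; exact main S h2 h1
  · intro S hS
    refine ⟨convexHull_subset_affineSpan _ hS, ?_⟩
    refine convexHull_min ?_ DS_convex hS
    rintro M ⟨σ, _, rfl⟩
    exact pm_mem_DS σ
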